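/- Let P be a finite poset and φ a partial representation of P by partial functions: each u is assigned a piecewise linear continuous function φ(u) defined on a (possibly empty) closed subinterval of [0,1], such that u < v in P implies φ(u)(x) < φ(v)(x) for all x in the intersection of the domains. Define Reg(u) = φ(u)* ∩ ∩_{a > u} φ(a)↓ ∩ ∩_{a < u} φ(a)↑, where φ(a)* is the graph of φ(a) together with all points over [0,1] \ dom φ(a), φ(a)↓ (resp. φ(a)↑) is the open region strictly below (above) φ(a) over dom φ(a) together with all points over [0,1] \ dom φ(a). Then there exists a representation ψ of P by continuous functions on all of [0,1] extending every φ(u) if and only if for every pair of incomparable elements u, v of P, Reg(u) ∩ Reg(v) ≠ ∅. -/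

import Mathlib

/-- `f` is piecewise linear on the set `s` (a closed subinterval, possibly empty):
`s = [t 0, t n]` for monotone breakpoints `t`, and `f` is linear on each `[t i, t (i+1)]`. -/
def IsPWLOn (f : unitInterval → ℝ) (s : Set unitInterval) : Prop :=
  s = ∅ ∨ ∃ n : ℕ, ∃ t : Fin (n + 1) → unitInterval, Monotone t ∧
    s = Set.Icc (t 0) (t (Fin.last n)) ∧
    ∀ i : Fin n, ∃ a b : ℝ, ∀ x ∈ Set.Icc (t i.castSucc) (t i.succ), f x = a * (x : ℝ) + b

/-- The region of `u` for a partial representation by partial functions: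
`φ(u)* ∩ ⋂_{a > u} φ(a)↓ ∩ ⋂_{a < u} φ(a)↑`, where points over `[0,1] \ dom φ(a)` are free. -/
def RegP {P : Type*} [PartialOrder P] (dom : P → Set unitInterval)
    (f : P → unitInterval → ℝ) (u : P) : Set (unitInterval × ℝ) :=
  {p | (p.1 ∈ dom u → p.2 = f u p.1) ∧
    (∀ a : P, u < a → p.1 ∈ dom a → p.2 < f a p.1) ∧
    (∀ a : P, a < u → p.1 ∈ dom a → f a p.1 < p.2)}


open Set Filter Topology Metric unitInterval

noncomputable section
namespace S17
-- from h1.lean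


/-- Any neighborhood in the unit interval contains a point outside a given finite set. -/
lemma exists_mem_nhds_notin (x : I) {N : Set I} (hN : N ∈ 𝓝 x) (F : Set I) (hF : F.Finite) :
    ∃ z ∈ N, z ∉ F := by
  have h1 : N.Infinite := by
    by_contra h
    rw [Set.not_infinite] at h
    -- N finite neighborhood: contradiction since Icc around x infinite
    obtain ⟨t, ht, hsub⟩ := mem_nhds_induced Subtype.val x N |>.mp hN
    obtain ⟨ε, hε, hball⟩ := Metric.mem_nhds_iff.mp ht
    set c : ℝ := max 0 ((x:ℝ) - ε/2)
    set d : ℝ := min 1 ((x:ℝ) + ε/2)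
    have hx0 : (0:ℝ) ≤ x := x.2.1
    have hx1 : (x:ℝ) ≤ 1 := x.2.2
    have hcd : c < d := by
      have : (0:ℝ) < 1 := one_pos
      simp only [c, d, max_lt_iff, lt_min_iff]
      constructor
      · exact ⟨one_pos, by linarith⟩
      · exact ⟨by linarith, by linarith⟩
    have hinf : (Set.Icc c d).Infinite := Set.Icc_infinite hcd
    have hmap : ∀ y ∈ Set.Icc c d, ∃ z : I, (z : ℝ) = y ∧ z ∈ N := by
      intro y hy
      have hy01 : y ∈ Set.Icc (0:ℝ) 1 := by
        constructor
        · exact le_trans (le_max_left _ _) hy.1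
        · exact le_trans hy.2 (min_le_left _ _)
      refine ⟨⟨y, hy01⟩, rfl, hsub ?_⟩
      show (⟨y, hy01⟩ : I).val ∈ t
      apply hball
      simp only [Metric.mem_ball]
      have h1 : y ≤ (x:ℝ) + ε/2 := le_trans hy.2 (min_le_right _ _)
      have h2 : (x:ℝ) - ε/2 ≤ y := le_trans (le_max_right _ _) hy.1
      rw [Real.dist_eq, abs_lt]; constructor <;> linarith
    have : (Set.Icc c d) ⊆ Subtype.val '' N := by
      intro y hy
      obtain ⟨z, hz, hzN⟩ := hmap y hy
      exact ⟨z, hzN, hz⟩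
    exact hinf (Set.Finite.subset (h.image _) this)
  obtain ⟨z, hz⟩ := (h1.diff hF).nonempty
  exact ⟨z, hz.1, hz.2⟩


-- from h2.lean


/-- Pasting continuity on a closed union. -/
lemma continuousOn_union_closed {f : I → ℝ} {s t : Set I} (hs : IsClosed s) (ht : IsClosed t)
    (hfs : ContinuousOn f s) (hft : ContinuousOn f t) : ContinuousOn f (s ∪ t) := by
  intro x hx
  have hcs : x ∉ s → ContinuousWithinAt f s x := fun h =>
    continuousWithinAt_of_notMem_closure (by rwa [hs.closure_eq])
  have hct : x ∉ t → ContinuousWithinAt f t x := fun h =>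
    continuousWithinAt_of_notMem_closure (by rwa [ht.closure_eq])
  rcases em (x ∈ s) with hxs | hxs <;> rcases em (x ∈ t) with hxt | hxt
  · exact (hfs x hxs).union (hft x hxt)
  · exact (hfs x hxs).union (hct hxt)
  · exact (hcs hxs).union (hft x hxt)
  · rcases hx with h | h; exact absurd h hxs; exact absurd h hxt

/-- Piecewise linear functions are continuous on their domain. -/
lemma pwl_continuousOn {f : I → ℝ} {s : Set I}
    (h : (s = ∅ ∨ ∃ n : ℕ, ∃ t : Fin (n + 1) → I, Monotone t ∧
      s = Set.Icc (t 0) (t (Fin.last n)) ∧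
      ∀ i : Fin n, ∃ a b : ℝ, ∀ x ∈ Set.Icc (t i.castSucc) (t i.succ), f x = a * (x : ℝ) + b)) :
    ContinuousOn f s := by
  rcases h with h | ⟨n, t, hmono, hs, hlin⟩
  · simp [h]
  subst hs
  induction n with
  | zero =>
    have hsingle : Set.Icc (t 0) (t (Fin.last 0)) = {t 0} := by
      have h0 : Fin.last 0 = 0 := rfl
      rw [h0, Set.Icc_self]
    rw [hsingle]
    exact continuousOn_singleton f (t 0)
  | succ m ih =>
    have hsplit : Set.Icc (t 0) (t (Fin.last (m+1))) =
        Set.Icc (t 0) (t ((Fin.last m).castSucc)) ∪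
          Set.Icc (t ((Fin.last m).castSucc)) (t (Fin.last (m+1))) := by
      rw [Set.Icc_union_Icc_eq_Icc]
      · exact hmono (by simp [Fin.le_def])
      · exact hmono (by simp [Fin.le_def, Fin.last])
    rw [hsplit]
    apply continuousOn_union_closed isClosed_Icc isClosed_Icc
    · have hm : Monotone (fun i : Fin (m+1) => t i.castSucc) :=
        fun i j hij => hmono (by rwa [Fin.castSucc_le_castSucc_iff])
      have hpieces : ∀ i : Fin m, ∃ a b : ℝ,
          ∀ x ∈ Set.Icc ((fun i : Fin (m+1) => t i.castSucc) i.castSucc)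
            ((fun i : Fin (m+1) => t i.castSucc) i.succ), f x = a * (x : ℝ) + b := by
        intro i
        obtain ⟨a, b, hab⟩ := hlin i.castSucc
        refine ⟨a, b, fun x hx => hab x ?_⟩
        have e2 : ((i.castSucc : Fin (m+1)).succ : Fin (m+2)) = (i.succ : Fin (m+1)).castSucc := by
          ext; simp
        rw [e2]
        exact hx
      have := ih (fun i : Fin (m+1) => t i.castSucc) hm hpieces
      simp only [Fin.castSucc_zero] at this
      exact this
    · obtain ⟨a, b, hab⟩ := hlin (Fin.last m)
      have e3 : ((Fin.last m).succ : Fin (m+2)) = Fin.last (m+1) := by ext; simp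
      rw [e3] at hab
      intro x hx
      apply ContinuousWithinAt.congr (f := fun x : I => a * (x:ℝ) + b)
      · exact ((continuous_const.mul continuous_subtype_val).add continuous_const).continuousWithinAt
      · intro y hy; exact hab y hy
      · exact hab x hx

-- from h3.lean


lemma exists_gap {C : Set I} (hC : IsClosed C) (hne : C.Nonempty) {p q : I → ℝ}
    (hp : ContinuousOn p C) (hq : ContinuousOn q C) (h : ∀ x ∈ C, p x < q x) :
    ∃ δ > 0, ∀ x ∈ C, p x + δ ≤ q x := by
  have hcomp : IsCompact C := hC.isCompact
  obtain ⟨x0, hx0, hmin⟩ := hcomp.exists_isMinOn hne ((hq.sub hp))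
  refine ⟨q x0 - p x0, by linarith [h x0 hx0], fun x hx => ?_⟩
  have := hmin hx
  simp only [Set.mem_setOf_eq] at this
  have : q x0 - p x0 ≤ q x - p x := this
  linarith

lemma bound_above {g : I → ℝ} (hg : Continuous g) : ∃ K, ∀ x, g x < K := by
  obtain ⟨x0, _, hmax⟩ := isCompact_univ.exists_isMaxOn (Set.univ_nonempty) hg.continuousOn
  exact ⟨g x0 + 1, fun x => by have := hmax (Set.mem_univ x); simp at this; linarith⟩

lemma bound_below {g : I → ℝ} (hg : Continuous g) : ∃ K, ∀ x, K < g x := by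
  obtain ⟨K, hK⟩ := bound_above (hg.neg)
  exact ⟨-K, fun x => by have := hK x; simp at this; linarith⟩

/-- Two-set inflation lemma. -/
lemma exists_inflate {A B : Set I} (hA : IsClosed A) (hB : IsClosed B) (hAne : A.Nonempty)
    (hBne : B.Nonempty) {p q : I → ℝ} (hp : Continuous p) (hq : Continuous q)
    (h : ∀ x ∈ A ∩ B, p x < q x) :
    ∃ M, 0 ≤ M ∧ ∀ x, p x < q x + M * (infDist x A + infDist x B) := by
  set K : Set I := {x | q x ≤ p x} with hK
  have hKc : IsClosed K := isClosed_le hq hp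
  rcases K.eq_empty_or_nonempty with hKe | hKne
  · refine ⟨0, le_rfl, fun x => ?_⟩
    have hx : x ∉ K := by rw [hKe]; exact Set.notMem_empty x
    simp only [hK, Set.mem_setOf_eq, not_le] at hx
    linarith
  · have hKcomp : IsCompact K := hKc.isCompact
    have hd : Continuous fun x : I => infDist x A + infDist x B :=
      (continuous_infDist_pt A).add (continuous_infDist_pt B)
    obtain ⟨xm, hxm, hmin⟩ := hKcomp.exists_isMinOn hKne hd.continuousOn
    set c : ℝ := infDist xm A + infDist xm B with hc
    have hcpos : 0 < c := by
      rcases lt_or_eq_of_le (add_nonneg (infDist_nonneg (s := A)) (infDist_nonneg (s := B)) : (0:ℝ) ≤ c) with h' | h'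
      · exact h'
      · exfalso
        have h1 : infDist xm A = 0 := by
          have := infDist_nonneg (s := A) (x := xm); have := infDist_nonneg (s := B) (x := xm); linarith
        have h2 : infDist xm B = 0 := by
          have := infDist_nonneg (s := A) (x := xm); linarith
        have hmA : xm ∈ A := (hA.mem_iff_infDist_zero hAne).mpr h1
        have hmB : xm ∈ B := (hB.mem_iff_infDist_zero hBne).mpr h2
        exact absurd (h xm ⟨hmA, hmB⟩) (not_lt.mpr hxm)
    obtain ⟨xM, hxM, hmax⟩ := hKcomp.exists_isMaxOn hKne (hp.sub hq).continuousOn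
    set Cm : ℝ := p xM - q xM with hCm
    have hCm0 : 0 ≤ Cm := by have := hxM; simp only [hK, Set.mem_setOf_eq] at this; linarith
    refine ⟨(Cm + 1) / c, by positivity, fun x => ?_⟩
    rcases em (x ∈ K) with hx | hx
    · have h1 : c ≤ infDist x A + infDist x B := hmin hx
      have h2 : p x - q x ≤ Cm := hmax hx
      have h3 : (Cm + 1) / c * c = Cm + 1 := div_mul_cancel₀ _ (ne_of_gt hcpos)
      have h4 : (Cm + 1) / c * c ≤ (Cm + 1) / c * (infDist x A + infDist x B) := by
        apply mul_le_mul_of_nonneg_left h1; positivity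
      nlinarith
    · simp only [hK, Set.mem_setOf_eq, not_le] at hx
      have : 0 ≤ (Cm + 1) / c * (infDist x A + infDist x B) := by
        apply mul_nonneg (by positivity) (add_nonneg infDist_nonneg infDist_nonneg)
      linarith

/-- One-set inflation lemma. -/
lemma exists_inflate_one {B : Set I} (hB : IsClosed B) (hBne : B.Nonempty) {p q : I → ℝ}
    (hp : Continuous p) (hq : Continuous q) (h : ∀ x ∈ B, p x < q x) :
    ∃ M, 0 ≤ M ∧ ∀ x, p x < q x + M * infDist x B := by
  obtain ⟨M, hM0, hM⟩ := exists_inflate hB hB hBne hBne hp hq (fun x hx => h x hx.1)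
  refine ⟨2 * M, by linarith, fun x => ?_⟩
  have := hM x
  ring_nf at this ⊢
  linarith

lemma continuous_fold_max {ι : Type*} [DecidableEq ι] (s : Finset ι) (K : ℝ) (ψ : ι → I → ℝ)
    (h : ∀ a ∈ s, Continuous (ψ a)) :
    Continuous fun x => s.fold max K (fun a => ψ a x) := by
  classical
  induction s using Finset.induction_on with
  | empty => simpa using continuous_const
  | insert a s' ha ih =>
    have : (fun x => (insert a s').fold max K (fun a => ψ a x)) =
        fun x => max (ψ a x) (s'.fold max K (fun b => ψ b x)) := by
      funext x; rw [Finset.fold_insert ha]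
    rw [this]
    exact (h a (Finset.mem_insert_self a s')).max
      (ih (fun b hb => h b (Finset.mem_insert_of_mem hb)))

lemma continuous_fold_min {ι : Type*} [DecidableEq ι] (s : Finset ι) (K : ℝ) (ψ : ι → I → ℝ)
    (h : ∀ a ∈ s, Continuous (ψ a)) :
    Continuous fun x => s.fold min K (fun a => ψ a x) := by
  classical
  induction s using Finset.induction_on with
  | empty => simpa using continuous_const
  | insert a s' ha ih =>
    have : (fun x => (insert a s').fold min K (fun a => ψ a x)) =
        fun x => min (ψ a x) (s'.fold min K (fun b => ψ b x)) := by
      funext x; rw [Finset.fold_insert ha]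
    rw [this]
    exact (h a (Finset.mem_insert_self a s')).min
      (ih (fun b hb => h b (Finset.mem_insert_of_mem hb)))

/-- Tietze extension from a closed subset of the unit interval. -/
lemma exists_ext {D : Set I} (hD : IsClosed D) {g : I → ℝ} (hg : ContinuousOn g D) :
    ∃ G : I → ℝ, Continuous G ∧ ∀ x ∈ D, G x = g x := by
  obtain ⟨G, hG⟩ := ContinuousMap.exists_restrict_eq (Y := ℝ) hD ⟨D.restrict g, hg.restrict⟩
  refine ⟨G, G.continuous, fun x hx => ?_⟩
  have := congrFun (congrArg ContinuousMap.toFun hG) ⟨x, hx⟩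
  simpa using (this.trans (Set.restrict_apply g D ⟨x, hx⟩))


-- from h4.lean

-- paste previous helpers via import trick: for testing, just axiomatize them
/-- Combine finitely many positive tolerances. -/
lemma finset_exists_pos {β : Type*} (s : Finset β) (p : β → ℝ → Prop)
    (h : ∀ b ∈ s, ∃ ε > 0, p b ε)
    (hmono : ∀ b ∈ s, ∀ ε ε' : ℝ, 0 < ε' → ε' ≤ ε → p b ε → p b ε') :
    ∃ ε > 0, ∀ b ∈ s, p b ε := by
  classical
  induction s using Finset.induction_on with
  | empty => exact ⟨1, one_pos, by simp⟩
  | insert b s' ha ih =>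
    obtain ⟨ε1, hε1, hp1⟩ := h b (Finset.mem_insert_self b s')
    obtain ⟨ε2, hε2, hp2⟩ := ih (fun c hc => h c (Finset.mem_insert_of_mem hc))
      (fun c hc => hmono c (Finset.mem_insert_of_mem hc))
    refine ⟨min ε1 ε2, lt_min hε1 hε2, fun c hc => ?_⟩
    rcases Finset.mem_insert.mp hc with rfl | hc
    · exact hmono c (Finset.mem_insert_self c s') ε1 _ (lt_min hε1 hε2) (min_le_left _ _) hp1
    · exact hmono c (Finset.mem_insert_of_mem hc) ε2 _ (lt_min hε1 hε2) (min_le_right _ _) (hp2 c hc)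

/-- The one-step insertion lemma. -/
lemma insertion {α β : Type*} [DecidableEq α] [DecidableEq β] (A : Finset α) (B : Finset β)
    (ψ : α → I → ℝ) (E : β → Set I) (q : β → I → ℝ) (D : Set I) (g : I → ℝ)
    (hψ : ∀ a ∈ A, Continuous (ψ a)) (hE : ∀ b ∈ B, IsClosed (E b))
    (hq : ∀ b ∈ B, ContinuousOn (q b) (E b)) (hD : IsClosed D) (hg : ContinuousOn g D)
    (c1 : ∀ a ∈ A, ∀ x ∈ D, ψ a x < g x)
    (c2 : ∀ a ∈ A, ∀ b ∈ B, ∀ x ∈ E b, ψ a x < q b x)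
    (c3 : ∀ b ∈ B, ∀ x ∈ D ∩ E b, g x < q b x) :
    ∃ h : I → ℝ, Continuous h ∧ (∀ x ∈ D, h x = g x) ∧ (∀ a ∈ A, ∀ x, ψ a x < h x) ∧
      (∀ b ∈ B, ∀ x ∈ E b, h x < q b x) := by
  classical
  set B' : Finset β := B.filter (fun b => (E b).Nonempty) with hB'
  have hB'B : ∀ b ∈ B', b ∈ B := fun b hb => (Finset.mem_filter.mp hb).1
  have hB'ne : ∀ b ∈ B', (E b).Nonempty := fun b hb => (Finset.mem_filter.mp hb).2
  -- Tietze extensions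
  obtain ⟨G, hGc, hGe⟩ := exists_ext hD hg
  have hQ : ∀ b : β, ∃ Q : I → ℝ, Continuous Q ∧ (b ∈ B → ∀ x ∈ E b, Q x = q b x) := by
    intro b
    rcases em (b ∈ B) with hb | hb
    · obtain ⟨Q, hQc, hQe⟩ := exists_ext (hE b hb) (hq b hb)
      exact ⟨Q, hQc, fun _ => hQe⟩
    · exact ⟨0, continuous_const, fun h => absurd h hb⟩
  choose Q hQc hQe using hQ
  -- Lower constant K0
  obtain ⟨K0g, hK0g⟩ := bound_below hGc
  obtain ⟨K0q, hK0q⟩ := bound_below (continuous_fold_min B' 0 Q (fun b _ => hQc b))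
  set K0 : ℝ := min K0g K0q with hK0
  have hK0G : ∀ x, K0 < G x := fun x => lt_of_le_of_lt (min_le_left _ _) (hK0g x)
  have hK0Q : ∀ b ∈ B', ∀ x, K0 < Q b x := by
    intro b hb x
    calc K0 ≤ K0q := min_le_right _ _
    _ < B'.fold min 0 (fun b => Q b x) := hK0q x
    _ ≤ Q b x := by
        exact (Finset.fold_min_le _).mpr (Or.inr ⟨b, hb, le_rfl⟩)
  -- Lower envelope L
  set L : I → ℝ := fun x => A.fold max K0 (fun a => ψ a x) with hL
  have hLc : Continuous L := continuous_fold_max A K0 ψ hψ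
  have hLψ : ∀ a ∈ A, ∀ x, ψ a x ≤ L x := fun a ha x =>
    (Finset.le_fold_max _).mpr (Or.inr ⟨a, ha, le_rfl⟩)
  have hLD : ∀ x ∈ D, L x < g x := by
    intro x hx
    apply (Finset.fold_max_lt _).mpr
    exact ⟨by rw [← hGe x hx]; exact hK0G x, fun a ha => c1 a ha x hx⟩
  have hLE : ∀ b ∈ B', ∀ x ∈ E b, L x < q b x := by
    intro b hb x hx
    apply (Finset.fold_max_lt _).mpr
    refine ⟨by rw [← hQe b (hB'B b hb) x hx]; exact hK0Q b hb x, fun a ha => c2 a ha b (hB'B b hb) x hx⟩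
  -- tolerance ε
  have hεex : ∃ ε > 0, ∀ b ∈ B',
      (∀ x ∈ E b, L x + ε ≤ q b x) ∧ (∀ x ∈ D ∩ E b, g x + ε ≤ q b x) := by
    apply finset_exists_pos
    · intro b hb
      obtain ⟨δ1, hδ1, hδ1p⟩ := exists_gap (hE b (hB'B b hb)) (hB'ne b hb)
        hLc.continuousOn (hq b (hB'B b hb)) (hLE b hb)
      rcases (D ∩ E b).eq_empty_or_nonempty with hDE | hDE
      · exact ⟨δ1, hδ1, hδ1p, by simp [hDE]⟩
      · obtain ⟨δ2, hδ2, hδ2p⟩ := exists_gap (hD.inter (hE b (hB'B b hb))) hDE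
          (hg.mono Set.inter_subset_left)
          ((hq b (hB'B b hb)).mono Set.inter_subset_right)
          (c3 b (hB'B b hb))
        exact ⟨min δ1 δ2, lt_min hδ1 hδ2,
          fun x hx => le_trans (by have := min_le_left δ1 δ2; linarith) (hδ1p x hx),
          fun x hx => le_trans (by have := min_le_right δ1 δ2; linarith) (hδ2p x hx)⟩
    · rintro b hb ε ε' hε' hle ⟨h1, h2⟩
      exact ⟨fun x hx => le_trans (by linarith) (h1 x hx),
        fun x hx => le_trans (by linarith) (h2 x hx)⟩
  obtain ⟨ε0, hε0, hε0p⟩ := hεex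
  set ε : ℝ := ε0 / 4 with hε
  have hεpos : 0 < ε := by positivity
  -- slopes M
  have hM : ∀ b : β, ∃ M, 0 ≤ M ∧ (b ∈ B' →
      (∀ x, L x + ε < Q b x - ε + M * infDist x (E b)) ∧
      (D.Nonempty → ∀ x, G x + ε < Q b x - ε + M * (infDist x D + infDist x (E b)))) := by
    intro b
    rcases em (b ∈ B') with hb | hb
    · have hgap : ∀ x ∈ E b, L x + ε < Q b x - ε := by
        intro x hx
        have h1 := (hε0p b hb).1 x hx
        rw [hQe b (hB'B b hb) x hx]
        simp only [hε] at *
        linarith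
      obtain ⟨M1, hM10, hM1⟩ := exists_inflate_one (hE b (hB'B b hb)) (hB'ne b hb)
        (hLc.add continuous_const) ((hQc b).sub continuous_const) hgap
      rcases D.eq_empty_or_nonempty with hDe | hDne
      · refine ⟨M1, hM10, fun _ => ⟨fun x => by have := hM1 x; simp only [Pi.add_apply, Pi.sub_apply] at this; linarith, fun hne => ?_⟩⟩
        · exact absurd hDe (Set.nonempty_iff_ne_empty.mp hne)
      · have hgap2 : ∀ x ∈ D ∩ E b, G x + ε < Q b x - ε := by
          intro x hx
          have h1 := (hε0p b hb).2 x hx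
          rw [hQe b (hB'B b hb) x hx.2, hGe x hx.1]
          simp only [hε] at *
          linarith
        obtain ⟨M2, hM20, hM2⟩ := exists_inflate hD (hE b (hB'B b hb)) hDne (hB'ne b hb)
          (hGc.add continuous_const) ((hQc b).sub continuous_const) hgap2
        refine ⟨max M1 M2, le_trans hM10 (le_max_left _ _), fun _ => ⟨fun x => ?_, fun _ x => ?_⟩⟩
        · have := hM1 x; simp only [Pi.add_apply, Pi.sub_apply] at this
          have h2 : M1 * infDist x (E b) ≤ max M1 M2 * infDist x (E b) :=
            mul_le_mul_of_nonneg_right (le_max_left _ _) infDist_nonneg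
          linarith
        · have := hM2 x; simp only [Pi.add_apply, Pi.sub_apply] at this
          have h2 : M2 * (infDist x D + infDist x (E b)) ≤
              max M1 M2 * (infDist x D + infDist x (E b)) :=
            mul_le_mul_of_nonneg_right (le_max_right _ _)
              (add_nonneg infDist_nonneg infDist_nonneg)
          linarith
    · exact ⟨0, le_rfl, fun h => absurd h hb⟩
  choose Mb hMb0 hMb using hM
  set M : ℝ := B'.fold max 0 Mb with hMdef
  have hMge : ∀ b ∈ B', Mb b ≤ M := fun b hb => (Finset.le_fold_max _).mpr (Or.inr ⟨b, hb, le_rfl⟩)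
  -- upper constant K1
  obtain ⟨K1', hK1'⟩ := bound_above (hLc.max hGc)
  set K1 : ℝ := K1' + ε with hK1def
  have hK1L : ∀ x, L x + ε < K1 := fun x => by
    have := hK1' x; simp only [lt_max_iff, max_lt_iff] at this; simp only [hK1def]; linarith [this.1]
  have hK1G : ∀ x, G x + ε < K1 := fun x => by
    have := hK1' x; simp only [max_lt_iff] at this; simp only [hK1def]; linarith [this.2]
  -- upper envelope U
  set U : I → ℝ := fun x => B'.fold min K1 (fun b => Q b x - ε + M * infDist x (E b)) with hU
  have hUc : Continuous U := by
    apply continuous_fold_min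
    intro b _
    exact ((hQc b).sub continuous_const).add (continuous_const.mul (continuous_infDist_pt (E b)))
  have hterm : ∀ b ∈ B', ∀ x, L x + ε < Q b x - ε + M * infDist x (E b) := by
    intro b hb x
    have h1 := ((hMb b) hb).1 x
    have h2 : Mb b * infDist x (E b) ≤ M * infDist x (E b) :=
      mul_le_mul_of_nonneg_right (hMge b hb) infDist_nonneg
    linarith
  have htermD : D.Nonempty → ∀ b ∈ B', ∀ x ∈ D, G x + ε < Q b x - ε + M * infDist x (E b) := by
    intro hDne b hb x hx
    have h1 := ((hMb b) hb).2 hDne x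
    have h2 : Mb b * (infDist x D + infDist x (E b)) ≤ M * (infDist x D + infDist x (E b)) :=
      mul_le_mul_of_nonneg_right (hMge b hb) (add_nonneg infDist_nonneg infDist_nonneg)
    have h3 : infDist x D = 0 := infDist_zero_of_mem hx
    rw [h3] at h1 h2
    simp only [zero_add] at h1 h2
    linarith
  have hU1 : ∀ x, L x + ε ≤ U x := by
    intro x
    apply (Finset.le_fold_min _).mpr
    exact ⟨le_of_lt (hK1L x), fun b hb => le_of_lt (hterm b hb x)⟩
  have hU2 : ∀ x ∈ D, g x + ε ≤ U x := by
    intro x hx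
    rw [← hGe x hx]
    apply (Finset.le_fold_min _).mpr
    refine ⟨le_of_lt (hK1G x), fun b hb => le_of_lt (htermD ⟨x, hx⟩ b hb x hx)⟩
  have hU3 : ∀ b ∈ B', ∀ x ∈ E b, U x ≤ q b x - ε := by
    intro b hb x hx
    have h0 : infDist x (E b) = 0 := infDist_zero_of_mem hx
    calc U x ≤ Q b x - ε + M * infDist x (E b) :=
          (Finset.fold_min_le _).mpr (Or.inr ⟨b, hb, le_rfl⟩)
    _ = q b x - ε := by rw [h0, hQe b (hB'B b hb) x hx]; ring
  -- margin η
  have hηex : ∃ η, 0 < η ∧ η ≤ ε ∧ ∀ x ∈ D, L x + η ≤ g x := by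
    rcases D.eq_empty_or_nonempty with hDe | hDne
    · exact ⟨ε, hεpos, le_rfl, by simp [hDe]⟩
    · obtain ⟨δ, hδ, hδp⟩ := exists_gap hD hDne hLc.continuousOn hg hLD
      exact ⟨min ε δ, lt_min hεpos hδ, min_le_left _ _,
        fun x hx => le_trans (by have := min_le_right ε δ; linarith) (hδp x hx)⟩
  obtain ⟨η, hη0, hηε, hηD⟩ := hηex
  refine ⟨fun x => max (L x + η) (min (G x) (U x)), ((hLc.add continuous_const).max (hGc.min hUc)), ?_, ?_, ?_⟩
  · -- equals g on D
    intro x hx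
    have h1 : min (G x) (U x) = g x := by
      rw [hGe x hx]
      exact min_eq_left (by have := hU2 x hx; linarith)
    show max (L x + η) (min (G x) (U x)) = g x
    rw [h1]
    exact max_eq_right (hηD x hx)
  · -- above all ψ a
    intro a ha x
    show ψ a x < max (L x + η) (min (G x) (U x))
    have := hLψ a ha x
    have h2 : L x + η ≤ max (L x + η) (min (G x) (U x)) := le_max_left _ _
    linarith
  · -- below all q b on E b
    intro b hb x hx
    rcases (E b).eq_empty_or_nonempty with hEe | hEne
    · rw [hEe] at hx; exact absurd hx (Set.notMem_empty x)
    · have hbB' : b ∈ B' := Finset.mem_filter.mpr ⟨hb, hEne⟩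
      show max (L x + η) (min (G x) (U x)) < q b x
      have h1 : max (L x + η) (min (G x) (U x)) ≤ U x := by
        apply max_le
        · have := hU1 x; linarith
        · exact min_le_right _ _
      have := hU3 b hbB' x hx
      linarith

-- from h5.lean

variable {P : Type*} [Fintype P] [PartialOrder P]

lemma extension_aux [DecidableEq P] (D : P → Set I) (g : P → I → ℝ)
    (hDc : ∀ u, IsClosed (D u)) (hgc : ∀ u, ContinuousOn (g u) (D u))
    (hst : ∀ u v, u < v → ∀ x ∈ D u ∩ D v, g u x < g v x) :
    ∀ s : Finset P, IsLowerSet (↑s : Set P) →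
      ∃ ψ : P → I → ℝ, (∀ u ∈ s, Continuous (ψ u)) ∧
        (∀ u ∈ s, ∀ x ∈ D u, ψ u x = g u x) ∧
        (∀ u ∈ s, ∀ v ∈ s, u < v → ∀ x, ψ u x < ψ v x) ∧
        (∀ u ∈ s, ∀ b, u < b → ∀ x ∈ D b, ψ u x < g b x) := by
  classical
  intro s
  induction s using Finset.strongInduction with
  | _ s ih =>
    intro hlow
    rcases s.eq_empty_or_nonempty with rfl | hne
    · exact ⟨fun _ _ => 0, by simp, by simp, by simp, by simp⟩
    obtain ⟨m, hm, hmax⟩ : ∃ m ∈ s, ∀ x ∈ s, ¬ m < x := by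
        obtain ⟨m, hm⟩ := s.exists_maximal hne
        exact ⟨m, hm.1, fun x hx h => lt_irrefl _ (h.trans_le (hm.2 hx h.le))⟩
    set t : Finset P := s.erase m with ht
    have htsub : t ⊂ s := Finset.erase_ssubset hm
    have htlow : IsLowerSet (↑t : Set P) := by
      intro a b hba ha
      have has : a ∈ s := (Finset.mem_erase.mp ha).2
      have ham : a ≠ m := (Finset.mem_erase.mp ha).1
      have hbs : b ∈ s := hlow hba has
      refine Finset.mem_erase.mpr ⟨?_, hbs⟩
      rintro rfl
      rcases lt_or_eq_of_le hba with h | h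
      · exact hmax a has h
      · exact ham h.symm
    obtain ⟨ψ₀, hψc, hψe, hψlt, hψinv⟩ := ih t htsub htlow
    have hAmem : ∀ a, a < m → a ∈ t := by
      intro a ha
      refine Finset.mem_erase.mpr ⟨ne_of_lt ha, hlow (le_of_lt ha) hm⟩
    set A : Finset P := Finset.univ.filter (fun a => a < m) with hA
    set B : Finset P := Finset.univ.filter (fun b => m < b) with hB
    have hAlt : ∀ a ∈ A, a < m := fun a ha => (Finset.mem_filter.mp ha).2
    have hBlt : ∀ b ∈ B, m < b := fun b hb => (Finset.mem_filter.mp hb).2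
    obtain ⟨h, hhc, hhe, hhlo, hhhi⟩ := insertion A B ψ₀ D g (D m) (g m)
      (fun a ha => hψc a (hAmem a (hAlt a ha)))
      (fun b _ => hDc b) (fun b _ => hgc b) (hDc m) (hgc m)
      (fun a ha x hx => hψinv a (hAmem a (hAlt a ha)) m (hAlt a ha) x hx)
      (fun a ha b hb x hx =>
        hψinv a (hAmem a (hAlt a ha)) b (lt_trans (hAlt a ha) (hBlt b hb)) x hx)
      (fun b hb x hx => hst m b (hBlt b hb) x hx)
    set ψ : P → I → ℝ := Function.update ψ₀ m h with hψdef
    have hψm : ψ m = h := Function.update_self m h ψ₀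
    have hψo : ∀ u, u ≠ m → ψ u = ψ₀ u := fun u hu => Function.update_of_ne hu h ψ₀
    refine ⟨ψ, ?_, ?_, ?_, ?_⟩
    · intro u hu
      rcases em (u = m) with hum | hum
      · rw [hum, hψm]; exact hhc
      · rw [hψo u hum]; exact hψc u (Finset.mem_erase.mpr ⟨hum, hu⟩)
    · intro u hu x hx
      rcases em (u = m) with hum | hum
      · rw [hum] at hx; rw [hum, hψm]; exact hhe x hx
      · rw [hψo u hum]; exact hψe u (Finset.mem_erase.mpr ⟨hum, hu⟩) x hx
    · intro u hu v hv huv x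
      rcases em (v = m) with hvm | hvm
      · have hum : u ≠ m := by rw [← hvm]; exact ne_of_lt huv
        have huv' : u < m := hvm ▸ huv
        rw [hvm, hψm, hψo u hum]
        exact hhlo u (Finset.mem_filter.mpr ⟨Finset.mem_univ u, huv'⟩) x
      · rcases em (u = m) with hum | hum
        · exact absurd (hum ▸ huv) (hmax v hv)
        · rw [hψo u hum, hψo v hvm]
          exact hψlt u (Finset.mem_erase.mpr ⟨hum, hu⟩) v (Finset.mem_erase.mpr ⟨hvm, hv⟩) huv x
    · intro u hu b hub x hx
      rcases em (u = m) with hum | hum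
      · rw [hum] at hub; rw [hum, hψm]
        exact hhhi b (Finset.mem_filter.mpr ⟨Finset.mem_univ b, hub⟩) x hx
      · rw [hψo u hum]
        exact hψinv u (Finset.mem_erase.mpr ⟨hum, hu⟩) b hub x hx

lemma extension (D : P → Set I) (g : P → I → ℝ)
    (hDc : ∀ u, IsClosed (D u)) (hgc : ∀ u, ContinuousOn (g u) (D u))
    (hst : ∀ u v, u < v → ∀ x ∈ D u ∩ D v, g u x < g v x) :
    ∃ ψ : P → I → ℝ, (∀ u, Continuous (ψ u)) ∧
      (∀ u, ∀ x ∈ D u, ψ u x = g u x) ∧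
      (∀ u v, u < v → ∀ x, ψ u x < ψ v x) := by
  classical
  obtain ⟨ψ, h1, h2, h3, _⟩ := extension_aux D g hDc hgc hst Finset.univ
    (by intro a b _ _; simp)
  exact ⟨ψ, fun u => h1 u (Finset.mem_univ u), fun u => h2 u (Finset.mem_univ u),
    fun u v huv => h3 u (Finset.mem_univ u) v (Finset.mem_univ v) huv⟩

-- from h6.lean




variable {P : Type*} [Fintype P] [PartialOrder P]
variable {dom : P → Set I} {f : P → I → ℝ}

/-- Persistence of a strict upper constraint. -/
lemma strict_up {x0 : I} {y0 : ℝ} {Y : I → ℝ} {a : P}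
    (hdomc : IsClosed (dom a)) (hfc : ContinuousOn (f a) (dom a))
    (hYt : Tendsto Y (𝓝 x0) (𝓝 y0)) (hc : x0 ∈ dom a → y0 < f a x0) :
    ∀ᶠ x in 𝓝 x0, x ∈ dom a → Y x < f a x := by
  by_cases hxa : x0 ∈ dom a
  · have hlt := hc hxa
    set c : ℝ := (f a x0 - y0) / 2 with hcdef
    have hcpos : 0 < c := by simp only [hcdef]; linarith
    have ev1 : ∀ᶠ x in 𝓝 x0, Y x < y0 + c := hYt (Iio_mem_nhds (by linarith))
    have ev2 : ∀ᶠ x in 𝓝 x0, x ∈ dom a → f a x0 - c < f a x := by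
      rw [← eventually_nhdsWithin_iff]
      exact (hfc x0 hxa) (Ioi_mem_nhds (by linarith))
    filter_upwards [ev1, ev2] with x h1 h2 hxd
    have := h2 hxd
    simp only [hcdef] at *
    linarith
  · have : ∀ᶠ x in 𝓝 x0, x ∉ dom a :=
      hdomc.isOpen_compl.mem_nhds hxa
    filter_upwards [this] with x hx hxd
    exact absurd hxd hx

/-- Persistence of a strict lower constraint. -/
lemma strict_down {x0 : I} {y0 : ℝ} {Y : I → ℝ} {a : P}
    (hdomc : IsClosed (dom a)) (hfc : ContinuousOn (f a) (dom a))
    (hYt : Tendsto Y (𝓝 x0) (𝓝 y0)) (hc : x0 ∈ dom a → f a x0 < y0) :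
    ∀ᶠ x in 𝓝 x0, x ∈ dom a → f a x < Y x := by
  by_cases hxa : x0 ∈ dom a
  · have hlt := hc hxa
    set c : ℝ := (y0 - f a x0) / 2 with hcdef
    have hcpos : 0 < c := by simp only [hcdef]; linarith
    have ev1 : ∀ᶠ x in 𝓝 x0, y0 - c < Y x := hYt (Ioi_mem_nhds (by linarith))
    have ev2 : ∀ᶠ x in 𝓝 x0, x ∈ dom a → f a x < f a x0 + c := by
      rw [← eventually_nhdsWithin_iff]
      exact (hfc x0 hxa) (Iio_mem_nhds (by linarith))
    filter_upwards [ev1, ev2] with x h1 h2 hxd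
    have := h2 hxd
    simp only [hcdef] at *
    linarith
  · have : ∀ᶠ x in 𝓝 x0, x ∉ dom a := hdomc.isOpen_compl.mem_nhds hxa
    filter_upwards [this] with x hx hxd
    exact absurd hxd hx

/-- Region points can be moved off a finite set, unless anchored in both domains. -/
lemma regA1 {u v : P} {x0 : I} {y0 : ℝ}
    (hdomc : ∀ w, IsClosed (dom w)) (hfc : ∀ w, ContinuousOn (f w) (dom w))
    (hu : (x0, y0) ∈ RegP dom f u) (hv : (x0, y0) ∈ RegP dom f v)
    (hxv : x0 ∉ dom v) (F : Set I) (hF : F.Finite) :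
    ∃ x y, (x, y) ∈ RegP dom f u ∩ RegP dom f v ∧ x ∉ F := by
  classical
  obtain ⟨hu1, hu2, hu3⟩ := hu
  obtain ⟨hv1, hv2, hv3⟩ := hv
  set Y : I → ℝ := fun x => if x ∈ dom u then f u x else y0 with hYdef
  have hYt : Tendsto Y (𝓝 x0) (𝓝 y0) := by
    by_cases hxu : x0 ∈ dom u
    · have hfy : f u x0 = y0 := (hu1 hxu).symm
      have hsplit : 𝓝 x0 = 𝓝[dom u] x0 ⊔ 𝓝[(dom u)ᶜ] x0 := by
        rw [← nhdsWithin_union, Set.union_compl_self, nhdsWithin_univ]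
      rw [hsplit, tendsto_sup]
      constructor
      · apply Filter.Tendsto.congr' (f₁ := f u)
        · filter_upwards [self_mem_nhdsWithin] with x hx
          simp only [hYdef, if_pos hx]
        · rw [← hfy]; exact hfc u x0 hxu
      · apply Filter.Tendsto.congr' (f₁ := fun _ => y0)
        · filter_upwards [self_mem_nhdsWithin] with x hx
          simp only [hYdef, if_neg hx]
        · exact tendsto_const_nhds
    · apply Filter.Tendsto.congr' (f₁ := fun _ => y0)
      · filter_upwards [(hdomc u).isOpen_compl.mem_nhds hxu] with x hx
        simp only [hYdef, if_neg hx]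
      · exact tendsto_const_nhds
  have hEv : ∀ᶠ x in 𝓝 x0, (x, Y x) ∈ RegP dom f u ∩ RegP dom f v := by
    have evdomv : ∀ᶠ x in 𝓝 x0, x ∉ dom v := (hdomc v).isOpen_compl.mem_nhds hxv
    have evu2 : ∀ᶠ x in 𝓝 x0, ∀ a : P, u < a → x ∈ dom a → Y x < f a x := by
      rw [eventually_all]
      intro a
      by_cases ha : u < a
      · have := strict_up (hdomc a) (hfc a) hYt (fun hx => hu2 a ha hx)
        filter_upwards [this] with x hx _ hxa
        exact hx hxa
      · filter_upwards with x hx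
        exact absurd hx ha
    have evu3 : ∀ᶠ x in 𝓝 x0, ∀ a : P, a < u → x ∈ dom a → f a x < Y x := by
      rw [eventually_all]
      intro a
      by_cases ha : a < u
      · have := strict_down (hdomc a) (hfc a) hYt (fun hx => hu3 a ha hx)
        filter_upwards [this] with x hx _ hxa
        exact hx hxa
      · filter_upwards with x hx
        exact absurd hx ha
    have evv2 : ∀ᶠ x in 𝓝 x0, ∀ a : P, v < a → x ∈ dom a → Y x < f a x := by
      rw [eventually_all]
      intro a
      by_cases ha : v < a
      · have := strict_up (hdomc a) (hfc a) hYt (fun hx => hv2 a ha hx)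
        filter_upwards [this] with x hx _ hxa
        exact hx hxa
      · filter_upwards with x hx
        exact absurd hx ha
    have evv3 : ∀ᶠ x in 𝓝 x0, ∀ a : P, a < v → x ∈ dom a → f a x < Y x := by
      rw [eventually_all]
      intro a
      by_cases ha : a < v
      · have := strict_down (hdomc a) (hfc a) hYt (fun hx => hv3 a ha hx)
        filter_upwards [this] with x hx _ hxa
        exact hx hxa
      · filter_upwards with x hx
        exact absurd hx ha
    filter_upwards [evdomv, evu2, evu3, evv2, evv3] with x h0 h2 h3 h4 h5
    refine ⟨⟨fun hx => ?_, h2, h3⟩, ⟨fun hx => absurd hx h0, h4, h5⟩⟩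
    simp only [hYdef, if_pos hx]
  obtain ⟨z, hz, hzF⟩ := exists_mem_nhds_notin x0 hEv F hF
  exact ⟨z, Y z, hz, hzF⟩

/-- Lemma A: choose a region point either anchored in both domains or avoiding `F`. -/
lemma regA {u v : P}
    (hdomc : ∀ w, IsClosed (dom w)) (hfc : ∀ w, ContinuousOn (f w) (dom w))
    (hne : (RegP dom f u ∩ RegP dom f v).Nonempty) (F : Set I) (hF : F.Finite) :
    ∃ x y, (x, y) ∈ RegP dom f u ∩ RegP dom f v ∧
      ((x ∈ dom u ∧ x ∈ dom v) ∨ x ∉ F) := by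
  obtain ⟨⟨x0, y0⟩, hu, hv⟩ := hne
  by_cases hxu : x0 ∈ dom u
  · by_cases hxv : x0 ∈ dom v
    · exact ⟨x0, y0, ⟨hu, hv⟩, Or.inl ⟨hxu, hxv⟩⟩
    · obtain ⟨x, y, hxy, hxF⟩ := regA1 hdomc hfc hu hv hxv F hF
      exact ⟨x, y, hxy, Or.inr hxF⟩
  · obtain ⟨x, y, hxy, hxF⟩ := regA1 hdomc hfc hv hu hxu F hF
    exact ⟨x, y, ⟨hxy.2, hxy.1⟩, Or.inr hxF⟩


-- from h7.lean


/-- Continuity on a closed set union a finite set, given agreement with a continuous function. -/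
lemma continuousOn_union_finite {g fu : I → ℝ} {A Bf : Set I} (hA : IsClosed A)
    (hB : Bf.Finite) (hgA : ∀ x ∈ A, g x = fu x) (hfc : ContinuousOn fu A) :
    ContinuousOn g (A ∪ Bf) := by
  intro x1 hx1
  have hsplitset : A ∪ Bf = A ∪ ((Bf \ {x1}) ∪ (Bf ∩ {x1})) := by
    rw [Set.diff_union_inter]
  have hsplit : 𝓝[A ∪ Bf] x1 = 𝓝[A] x1 ⊔ (𝓝[Bf \ {x1}] x1 ⊔ 𝓝[Bf ∩ {x1}] x1) := by
    rw [hsplitset, nhdsWithin_union, nhdsWithin_union]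
  unfold ContinuousWithinAt
  rw [hsplit, tendsto_sup, tendsto_sup]
  refine ⟨?_, ?_, ?_⟩
  · by_cases hxA : x1 ∈ A
    · apply Filter.Tendsto.congr' (f₁ := fu)
      · filter_upwards [self_mem_nhdsWithin] with x hx
        exact (hgA x hx).symm
      · rw [hgA x1 hxA]
        exact hfc x1 hxA
    · have : 𝓝[A] x1 = ⊥ := by
        by_contra h
        exact hxA (hA.closure_eq ▸ mem_closure_iff_nhdsWithin_neBot.mpr (Filter.neBot_iff.mpr h))
      rw [this]
      exact tendsto_bot
  · have hclosed : IsClosed (Bf \ {x1}) := (hB.diff (t := {x1})).isClosed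
    have hnotin : x1 ∉ Bf \ {x1} := fun h => h.2 rfl
    have : 𝓝[Bf \ {x1}] x1 = ⊥ := by
      by_contra h
      exact hnotin (hclosed.closure_eq ▸
        mem_closure_iff_nhdsWithin_neBot.mpr (Filter.neBot_iff.mpr h))
    rw [this]
    exact tendsto_bot
  · have hle : 𝓝[Bf ∩ {x1}] x1 ≤ 𝓝[{x1}] x1 := nhdsWithin_mono x1 Set.inter_subset_right
    apply Filter.Tendsto.mono_left _ hle
    rw [nhdsWithin_singleton]
    exact tendsto_pure_nhds g x1

variable {P : Type*} [Fintype P] [PartialOrder P]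
variable {dom : P → Set I} {f : P → I → ℝ}


/-- Choose region points for all incomparable pairs. -/
lemma choose_points (hdomc : ∀ w, IsClosed (dom w)) (hfc : ∀ w, ContinuousOn (f w) (dom w))
    (hreg : ∀ u v : P, u ≠ v → ¬ u < v → ¬ v < u →
      (RegP dom f u ∩ RegP dom f v).Nonempty) :
    ∃ pt : P × P → I × ℝ,
      (∀ p : P × P, p.1 ≠ p.2 → ¬ p.1 < p.2 → ¬ p.2 < p.1 →
        pt p ∈ RegP dom f p.1 ∩ RegP dom f p.2) ∧
      (∀ p q : P × P, (p.1 ≠ p.2 ∧ ¬ p.1 < p.2 ∧ ¬ p.2 < p.1) →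
        (q.1 ≠ q.2 ∧ ¬ q.1 < q.2 ∧ ¬ q.2 < q.1) → p ≠ q →
        ((pt p).1 ∈ dom p.1 ∧ (pt p).1 ∈ dom p.2) ∨
        ((pt q).1 ∈ dom q.1 ∧ (pt q).1 ∈ dom q.2) ∨ (pt p).1 ≠ (pt q).1) := by
  classical
  suffices h : ∀ s : Finset (P × P), ∃ pt : P × P → I × ℝ,
      (∀ p ∈ s, p.1 ≠ p.2 → ¬ p.1 < p.2 → ¬ p.2 < p.1 →
        pt p ∈ RegP dom f p.1 ∩ RegP dom f p.2) ∧
      (∀ p ∈ s, ∀ q ∈ s, (p.1 ≠ p.2 ∧ ¬ p.1 < p.2 ∧ ¬ p.2 < p.1) →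
        (q.1 ≠ q.2 ∧ ¬ q.1 < q.2 ∧ ¬ q.2 < q.1) → p ≠ q →
        ((pt p).1 ∈ dom p.1 ∧ (pt p).1 ∈ dom p.2) ∨
        ((pt q).1 ∈ dom q.1 ∧ (pt q).1 ∈ dom q.2) ∨ (pt p).1 ≠ (pt q).1) by
    obtain ⟨pt, h1, h2⟩ := h Finset.univ
    exact ⟨pt, fun p => h1 p (Finset.mem_univ p),
      fun p q => h2 p (Finset.mem_univ p) q (Finset.mem_univ q)⟩
  intro s
  induction s using Finset.induction_on with
  | empty => exact ⟨fun _ => (0, 0), by simp, by simp⟩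
  | insert p0 s' hp0 ih =>
    obtain ⟨pt, h1, h2⟩ := ih
    by_cases hinc : p0.1 ≠ p0.2 ∧ ¬ p0.1 < p0.2 ∧ ¬ p0.2 < p0.1
    · set F : Set I := (fun q => (pt q).1) '' ↑s' with hF
      have hFfin : F.Finite := (s'.finite_toSet).image _
      obtain ⟨x, y, hxy, hcase⟩ := regA hdomc hfc (hreg p0.1 p0.2 hinc.1 hinc.2.1 hinc.2.2) F hFfin
      set pt' : P × P → I × ℝ := Function.update pt p0 (x, y) with hpt'
      have hpt'p0 : pt' p0 = (x, y) := Function.update_self p0 (x, y) pt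
      have hpt'o : ∀ q, q ≠ p0 → pt' q = pt q := fun q hq => Function.update_of_ne hq (x, y) pt
      refine ⟨pt', ?_, ?_⟩
      · intro p hp hne hlt hgt
        rcases Finset.mem_insert.mp hp with hpe | hps
        · rw [hpe, hpt'p0]; exact hxy
        · have hpne : p ≠ p0 := fun h => hp0 (h ▸ hps)
          rw [hpt'o p hpne]; exact h1 p hps hne hlt hgt
      · intro p hp q hq hip hiq hpq
        rcases Finset.mem_insert.mp hp with hpe | hps <;>
          rcases Finset.mem_insert.mp hq with hqe | hqs
        · exact absurd (hpe.trans hqe.symm) hpq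
        · -- p = p0 new, q old
          have hqne : q ≠ p0 := fun h => hp0 (h ▸ hqs)
          rw [hpe, hpt'p0, hpt'o q hqne]
          rcases hcase with hanch | hF'
          · exact Or.inl (by simpa using hanch)
          · refine Or.inr (Or.inr ?_)
            intro heq
            apply hF'
            have hmem : (pt q).1 ∈ F := Set.mem_image_of_mem (fun r => (pt r).1) hqs
            have hxe : x = (pt q).1 := by simpa using heq
            rw [hxe]; exact hmem
        · -- p old, q = p0 new
          have hpne : p ≠ p0 := fun h => hp0 (h ▸ hps)
          rw [hqe, hpt'p0, hpt'o p hpne]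
          rcases hcase with hanch | hF'
          · exact Or.inr (Or.inl (by simpa using hanch))
          · refine Or.inr (Or.inr ?_)
            intro heq
            apply hF'
            have hmem : (pt p).1 ∈ F := Set.mem_image_of_mem (fun r => (pt r).1) hps
            have hxe : x = (pt p).1 := by simpa using heq.symm
            rw [hxe]; exact hmem
        · have hpne : p ≠ p0 := fun h => hp0 (h ▸ hps)
          have hqne : q ≠ p0 := fun h => hp0 (h ▸ hqs)
          rw [hpt'o p hpne, hpt'o q hqne]
          exact h2 p hps q hqs hip hiq hpq
    · set pt' : P × P → I × ℝ := Function.update pt p0 (0, 0) with hpt'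
      have hpt'o : ∀ q, q ≠ p0 → pt' q = pt q := fun q hq => Function.update_of_ne hq (0, 0) pt
      refine ⟨pt', ?_, ?_⟩
      · intro p hp hne hlt hgt
        rcases Finset.mem_insert.mp hp with hpe | hps
        · rw [hpe] at hne hlt hgt; exact absurd ⟨hne, hlt, hgt⟩ hinc
        · have hpne : p ≠ p0 := fun h => hp0 (h ▸ hps)
          rw [hpt'o p hpne]; exact h1 p hps hne hlt hgt
      · intro p hp q hq hip hiq hpq
        rcases Finset.mem_insert.mp hp with hpe | hps
        · rw [hpe] at hip; exact absurd hip hinc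
        rcases Finset.mem_insert.mp hq with hqe | hqs
        · rw [hqe] at hiq; exact absurd hiq hinc
        have hpne : p ≠ p0 := fun h => hp0 (h ▸ hps)
        have hqne : q ≠ p0 := fun h => hp0 (h ▸ hqs)
        rw [hpt'o p hpne, hpt'o q hqne]
        exact h2 p hps q hqs hip hiq hpq

-- from h8.lean

variable {P : Type*} [Fintype P] [PartialOrder P]


variable {dom : P → Set I} {f : P → I → ℝ}

lemma backward (hdomc : ∀ w, IsClosed (dom w)) (hfc : ∀ w, ContinuousOn (f w) (dom w))
    (hrep : ∀ u v : P, u < v → ∀ x ∈ dom u ∩ dom v, f u x < f v x)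
    (hreg : ∀ u v : P, u ≠ v → ¬ u < v → ¬ v < u →
      (RegP dom f u ∩ RegP dom f v).Nonempty) :
    ∃ ψ : P → C(unitInterval, ℝ),
      (∀ u v : P, u < v ↔ ∀ x : unitInterval, ψ u x < ψ v x) ∧
      ∀ u : P, ∀ x ∈ dom u, ψ u x = f u x := by
  classical
  obtain ⟨pt, hpt1, hpt2⟩ := choose_points hdomc hfc hreg
  set S : Finset (P × P) :=
    Finset.univ.filter (fun p : P × P => p.1 ≠ p.2 ∧ ¬ p.1 < p.2 ∧ ¬ p.2 < p.1) with hSdef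
  have hSmem : ∀ p : P × P, p ∈ S ↔ (p.1 ≠ p.2 ∧ ¬ p.1 < p.2 ∧ ¬ p.2 < p.1) := by
    intro p; simp [hSdef]
  set T : P → Finset I :=
    fun u => (S.filter (fun p => p.1 = u ∨ p.2 = u)).image (fun p => (pt p).1) with hTdef
  have hTmem : ∀ u x, x ∈ T u ↔ ∃ p, (p ∈ S ∧ (p.1 = u ∨ p.2 = u)) ∧ (pt p).1 = x := by
    intro u x
    simp [hTdef, Finset.mem_image, Finset.mem_filter]
  set D : P → Set I := fun u => dom u ∪ ↑(T u) with hDdef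
  set g : P → I → ℝ := fun u x => if x ∈ dom u then f u x else
    (if h : ∃ p, p ∈ S ∧ (p.1 = u ∨ p.2 = u) ∧ (pt p).1 = x then (pt h.choose).2 else 0)
    with hgdef
  -- region membership for touching pairs
  have hRegu : ∀ (u : P) (p : P × P), p ∈ S → (p.1 = u ∨ p.2 = u) →
      pt p ∈ RegP dom f u := by
    intro u p hpS hpu
    have hi := (hSmem p).mp hpS
    have hm := hpt1 p hi.1 hi.2.1 hi.2.2
    rcases hpu with h | h
    · rw [← h]; exact hm.1
    · rw [← h]; exact hm.2
  -- anchoredness transfer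
  have hanchmem : ∀ (u : P) (p : P × P), (p.1 = u ∨ p.2 = u) →
      ((pt p).1 ∈ dom p.1 ∧ (pt p).1 ∈ dom p.2) → (pt p).1 ∈ dom u := by
    intro u p hpu hanch
    rcases hpu with h | h
    · rw [← h]; exact hanch.1
    · rw [← h]; exact hanch.2
  -- evaluation of g at chosen points
  have heval : ∀ (u : P) (p : P × P), p ∈ S → (p.1 = u ∨ p.2 = u) →
      g u (pt p).1 = (pt p).2 := by
    intro u p hpS hpu
    by_cases hxd : (pt p).1 ∈ dom u
    · have h1 := (hRegu u p hpS hpu).1 hxd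
      rw [hgdef]
      simp only [if_pos hxd]
      exact h1.symm
    · have hex : ∃ q, q ∈ S ∧ (q.1 = u ∨ q.2 = u) ∧ (pt q).1 = (pt p).1 :=
        ⟨p, hpS, hpu, rfl⟩
      rw [hgdef]
      simp only [if_neg hxd, dif_pos hex]
      obtain ⟨hqS, hqu, hqx⟩ := hex.choose_spec
      by_cases hq : hex.choose = p
      · rw [hq]
      · have hiq := (hSmem _).mp hqS
        have hip := (hSmem p).mp hpS
        rcases hpt2 hex.choose p hiq hip hq with hanch | hanch | hne
        · exact absurd (hqx ▸ hanchmem u hex.choose hqu hanch) hxd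
        · exact absurd (hanchmem u p hpu hanch) hxd
        · exact absurd hqx hne
  -- g agrees with f on dom
  have hgf : ∀ (u : P), ∀ x ∈ dom u, g u x = f u x := by
    intro u x hx
    rw [hgdef]; simp only [if_pos hx]
  -- closedness
  have hDc : ∀ u, IsClosed (D u) := by
    intro u
    rw [hDdef]
    exact (hdomc u).union (T u).finite_toSet.isClosed
  -- continuity
  have hgc : ∀ u, ContinuousOn (g u) (D u) := by
    intro u
    rw [hDdef]
    exact continuousOn_union_finite (hdomc u) (T u).finite_toSet (hgf u) (hfc u)
  -- strictness
  have hst : ∀ u v, u < v → ∀ x ∈ D u ∩ D v, g u x < g v x := by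
    intro u v huv x hx
    obtain ⟨hxu, hxv⟩ := hx
    simp only [hDdef] at hxu hxv
    by_cases hdu : x ∈ dom u <;> by_cases hdv : x ∈ dom v
    · rw [hgf u x hdu, hgf v x hdv]
      exact hrep u v huv x ⟨hdu, hdv⟩
    · -- x ∈ dom u, x ∉ dom v : x comes from a pair touching v
      have hxv' : x ∈ T v := by
        rcases hxv with h | h
        · exact absurd h hdv
        · exact Finset.mem_coe.mp h
      obtain ⟨q, ⟨hqS, hqv⟩, hqx⟩ := (hTmem v x).mp hxv'
      have h3 := (hRegu v q hqS hqv).2.2 u huv (hqx ▸ hdu)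
      rw [hqx] at h3
      have e1 : g u x = f u x := hgf u x hdu
      have e2 : g v x = (pt q).2 := by rw [← hqx]; exact heval v q hqS hqv
      rw [e1, e2]
      exact h3
    · -- x ∉ dom u, x ∈ dom v
      have hxu' : x ∈ T u := by
        rcases hxu with h | h
        · exact absurd h hdu
        · exact Finset.mem_coe.mp h
      obtain ⟨q, ⟨hqS, hqu⟩, hqx⟩ := (hTmem u x).mp hxu'
      have h2 := (hRegu u q hqS hqu).2.1 v huv (hqx ▸ hdv)
      rw [hqx] at h2
      have e1 : g v x = f v x := hgf v x hdv
      have e2 : g u x = (pt q).2 := by rw [← hqx]; exact heval u q hqS hqu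
      rw [e1, e2]
      exact h2
    · -- neither: impossible
      exfalso
      have hxu' : x ∈ T u := by
        rcases hxu with h | h
        · exact absurd h hdu
        · exact Finset.mem_coe.mp h
      have hxv' : x ∈ T v := by
        rcases hxv with h | h
        · exact absurd h hdv
        · exact Finset.mem_coe.mp h
      obtain ⟨p, ⟨hpS, hpu⟩, hpx⟩ := (hTmem u x).mp hxu'
      obtain ⟨q, ⟨hqS, hqv⟩, hqx⟩ := (hTmem v x).mp hxv'
      by_cases hpq : p = q
      · -- p touches both u and v with u < v: contradicts incomparability of p
        subst hpq
        have hip := (hSmem p).mp hpS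
        have hne : u ≠ v := ne_of_lt huv
        rcases hpu with h1 | h1 <;> rcases hqv with h2 | h2
        · exact hne (h1.symm.trans h2)
        · exact hip.2.1 (h1 ▸ h2 ▸ huv)
        · exact hip.2.2 (h2 ▸ h1 ▸ huv)
        · exact hne (h1.symm.trans h2)
      · rcases hpt2 p q ((hSmem p).mp hpS) ((hSmem q).mp hqS) hpq with hanch | hanch | hne
        · exact hdu (hpx ▸ hanchmem u p hpu hanch)
        · exact hdv (hqx ▸ hanchmem v q hqv hanch)
        · exact hne (hpx.trans hqx.symm)
  obtain ⟨ψ, hψc, hψe, hψlt⟩ := extension D g hDc hgc hst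
  -- the incomparable-touch property
  have htouch : ∀ u v : P, u ≠ v → ¬ u < v → ¬ v < u → ∃ x : I, ψ u x = ψ v x := by
    intro u v hne hlt hgt
    have hpS : ((u, v) : P × P) ∈ S := (hSmem (u, v)).mpr ⟨hne, hlt, hgt⟩
    set x : I := (pt ((u, v) : P × P)).1 with hxdef
    have hxu : x ∈ T u := (hTmem u x).mpr ⟨(u, v), ⟨hpS, Or.inl rfl⟩, rfl⟩
    have hxv : x ∈ T v := (hTmem v x).mpr ⟨(u, v), ⟨hpS, Or.inr rfl⟩, rfl⟩
    have hDu : x ∈ D u := by rw [hDdef]; exact Or.inr hxu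
    have hDv : x ∈ D v := by rw [hDdef]; exact Or.inr hxv
    refine ⟨x, ?_⟩
    rw [hψe u x hDu, hψe v x hDv, heval u (u, v) hpS (Or.inl rfl),
      heval v (u, v) hpS (Or.inr rfl)]
  refine ⟨fun u => ⟨ψ u, hψc u⟩, ?_, ?_⟩
  · intro u v
    constructor
    · intro huv x
      exact hψlt u v huv x
    · intro hall
      by_contra hlt
      by_cases heq : u = v
      · subst heq
        exact lt_irrefl _ (hall 0)
      · by_cases hgt : v < u
        · have h1 := hψlt v u hgt 0
          have h2 := hall 0
          simp only [ContinuousMap.coe_mk] at h2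
          exact lt_asymm h1 h2
        · obtain ⟨x, hx⟩ := htouch u v heq hlt hgt
          have := hall x
          simp only [ContinuousMap.coe_mk] at this
          rw [hx] at this
          exact lt_irrefl _ this
  · intro u x hx
    have hDu : x ∈ D u := by rw [hDdef]; exact Or.inl hx
    show ψ u x = f u x
    rw [hψe u x hDu, hgf u x hx]

-- from h9.lean

variable {P : Type*} [Fintype P] [PartialOrder P]


variable {dom : P → Set I} {f : P → I → ℝ}

lemma forward (ψ : P → C(unitInterval, ℝ))
    (hψ : ∀ u v : P, u < v ↔ ∀ x : unitInterval, ψ u x < ψ v x)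
    (hext : ∀ u : P, ∀ x ∈ dom u, ψ u x = f u x) :
    ∀ u v : P, u ≠ v → ¬ u < v → ¬ v < u →
      (RegP dom f u ∩ RegP dom f v).Nonempty := by
  intro u v hne hlt hgt
  have h1 : ∃ x1 : I, ψ v x1 ≤ ψ u x1 := by
    by_contra h
    push_neg at h
    exact hlt ((hψ u v).mpr h)
  have h2 : ∃ x2 : I, ψ u x2 ≤ ψ v x2 := by
    by_contra h
    push_neg at h
    exact hgt ((hψ v u).mpr h)
  obtain ⟨x1, hx1⟩ := h1
  obtain ⟨x2, hx2⟩ := h2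
  set φ : ℝ → ℝ := fun t => ψ u (Set.projIcc (0:ℝ) 1 zero_le_one t) -
    ψ v (Set.projIcc (0:ℝ) 1 zero_le_one t) with hφdef
  have hφc : Continuous φ :=
    ((ψ u).continuous.comp continuous_projIcc).sub ((ψ v).continuous.comp continuous_projIcc)
  have hφ1 : 0 ≤ φ (x1 : ℝ) := by
    simp only [hφdef, Set.projIcc_val]
    exact sub_nonneg.mpr hx1
  have hφ2 : φ (x2 : ℝ) ≤ 0 := by
    simp only [hφdef, Set.projIcc_val]
    exact sub_nonpos.mpr hx2
  have hmem : (0:ℝ) ∈ Set.uIcc (φ (x1:ℝ)) (φ (x2:ℝ)) := Set.mem_uIcc.mpr (Or.inr ⟨hφ2, hφ1⟩)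
  obtain ⟨t, _, ht⟩ := intermediate_value_uIcc hφc.continuousOn hmem
  set x : I := Set.projIcc (0:ℝ) 1 zero_le_one t with hxdef
  have hxeq : ψ u x = ψ v x := by
    have : φ t = 0 := ht
    simp only [hφdef] at this
    rw [← hxdef] at this
    exact sub_eq_zero.mp this
  refine ⟨(x, ψ u x), ⟨fun hx => hext u x hx, ?_, ?_⟩, ⟨fun hx => ?_, ?_, ?_⟩⟩
  · intro a ha hxa
    rw [← hext a x hxa]
    exact (hψ u a).mp ha x
  · intro a ha hxa
    rw [← hext a x hxa]
    exact (hψ a u).mp ha x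
  · rw [hxeq, ← hext v x hx]
  · intro a ha hxa
    rw [← hext a x hxa, hxeq]
    exact (hψ v a).mp ha x
  · intro a ha hxa
    rw [← hext a x hxa, hxeq]
    exact (hψ a v).mp ha x

end S17
end

/-- a partial representation of a finite poset by piecewise linear partial
functions extends to a representation by continuous functions on all of `[0,1]` iff the
regions of any two incomparable elements intersect. -/
theorem stmt17 {P : Type*} [Fintype P] [PartialOrder P]
    (dom : P → Set unitInterval) (f : P → unitInterval → ℝ)
    (hdom : ∀ u : P, IsClosed (dom u) ∧ (dom u).OrdConnected)
    (hpl : ∀ u : P, IsPWLOn (f u) (dom u))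
    (hrep : ∀ u v : P, u < v → ∀ x ∈ dom u ∩ dom v, f u x < f v x) :
    (∃ ψ : P → C(unitInterval, ℝ),
        (∀ u v : P, u < v ↔ ∀ x : unitInterval, ψ u x < ψ v x) ∧
        ∀ u : P, ∀ x ∈ dom u, ψ u x = f u x) ↔
      ∀ u v : P, u ≠ v → ¬ u < v → ¬ v < u →
        (RegP dom f u ∩ RegP dom f v).Nonempty := by
  have hdomc : ∀ w : P, IsClosed (dom w) := fun w => (hdom w).1
  have hfc : ∀ w : P, ContinuousOn (f w) (dom w) := fun w => S17.pwl_continuousOn (hpl w)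
  constructor
  · rintro ⟨ψ, hψ, hext⟩
    exact S17.forward ψ hψ hext
  · intro hreg
    exact S17.backward hdomc hfc hrep hreg
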